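/- Let (C, ∂, A) be a finite-dimensional filtered complex over the Novikov field Λ with a fixed generating basis x_1,…,x_n and strictly action-decreasing differential ∂ (∂² = 0). Suppose p of the generators are ε-isolated, meaning every nonzero matrix entry term f T^a of ∂ from or to such a generator x has action difference strictly greater than ε. Then the number of bars of length greater than ε in the barcode of C is at least p/2. -/

import Mathlib

open Finset Classical
noncomputable section

/-- The Novikov valuation `ν(λ) = min{a_j : f_j ≠ 0}`. -/
noncomputable def nu {F : Type*} [Field F] (l : HahnSeries ℝ F) : ℝ := l.order

/-- The action `A(∑ λᵢ xᵢ) = maxᵢ (A(xᵢ) − ν(λᵢ))` on `C = ⊕ᵢ Λ xᵢ`. -/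
noncomputable def act {F : Type*} [Field F] {ι : Type*} [Fintype ι]
    (Ax : ι → ℝ) (c : ι → HahnSeries ℝ F) : WithBot ℝ :=
  Finset.univ.sup fun i => if c i = 0 then (⊥ : WithBot ℝ) else ((Ax i - nu (c i) : ℝ) : WithBot ℝ)

/-- `A(λ x) = A(x) − ν(λ)` for `λ ≠ 0`, extended by `A(0) = ⊥`. -/
noncomputable def scaledAct {F : Type*} [Field F] {ι : Type*} [Fintype ι]
    (Ax : ι → ℝ) (l : HahnSeries ℝ F) (v : ι → HahnSeries ℝ F) : WithBot ℝ :=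
  if l = 0 then ⊥ else WithBot.map (fun t => t - nu l) (act Ax v)

/-- Orthogonality of a finite family: `A(∑ λᵢ ξᵢ) = maxᵢ (A(ξᵢ) − ν(λᵢ))`. -/
def Orthogonal {F : Type*} [Field F] {ι : Type*} [Fintype ι] {κ : Type*} [Fintype κ]
    (Ax : ι → ℝ) (ξ : κ → ι → HahnSeries ℝ F) : Prop :=
  ∀ l : κ → HahnSeries ℝ F,
    act Ax (∑ j, l j • ξ j) = Finset.univ.sup fun j => scaledAct Ax (l j) (ξ j)

/-- The differential `∂` is strictly action-decreasing. -/
def StrictlyActionDecreasing {F : Type*} [Field F] {ι : Type*} [Fintype ι]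
    (Ax : ι → ℝ)
    (D : (ι → HahnSeries ℝ F) →ₗ[HahnSeries ℝ F] (ι → HahnSeries ℝ F)) : Prop :=
  ∀ c : ι → HahnSeries ℝ F, c ≠ 0 → act Ax (D c) < act Ax c

/-- A generator `xᵢ` is `ε`-isolated: every nonzero term `f T^a` of a matrix coefficient
`λ_{ij}` of `∂` from or to `xᵢ` gives an arrow of length (action difference)
`A(xᵢ) − A(xⱼ) + a > ε`. -/
def EpsIsolated {F : Type*} [Field F] {ι : Type*} [Fintype ι]
    (Ax : ι → ℝ)
    (D : (ι → HahnSeries ℝ F) →ₗ[HahnSeries ℝ F] (ι → HahnSeries ℝ F))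
    (ε : ℝ) (i : ι) : Prop :=
  (∀ j : ι, ∀ a ∈ (D (Pi.single i 1) j).support, ε < Ax i - Ax j + a) ∧
  (∀ j : ι, ∀ a ∈ (D (Pi.single j 1) i).support, ε < Ax j - Ax i + a)

/-- A singular decomposition of the filtered complex `(C, ∂, A)`: an orthogonal basis
`{αᵢ, ηⱼ, γⱼ}` with `∂αᵢ = 0` and `∂γⱼ = ηⱼ`.  The finite bars of the barcode are the
action differences `A(γⱼ) − A(ηⱼ)`, and there are `nI = dim_Λ H(C)` infinite bars. -/
structure SingularDecomposition {F : Type*} [Field F] {ι : Type*} [Fintype ι]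
    (Ax : ι → ℝ)
    (D : (ι → HahnSeries ℝ F) →ₗ[HahnSeries ℝ F] (ι → HahnSeries ℝ F)) where
  nI : ℕ
  nF : ℕ
  alpha : Fin nI → ι → HahnSeries ℝ F
  eta : Fin nF → ι → HahnSeries ℝ F
  gamma : Fin nF → ι → HahnSeries ℝ F
  indep : LinearIndependent (HahnSeries ℝ F) (Sum.elim alpha (Sum.elim eta gamma))
  spans : ⊤ ≤ Submodule.span (HahnSeries ℝ F)
      (Set.range (Sum.elim alpha (Sum.elim eta gamma)))
  orth : Orthogonal Ax (Sum.elim alpha (Sum.elim eta gamma))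
  d_alpha : ∀ j, D (alpha j) = 0
  d_gamma : ∀ j, D (gamma j) = eta j

/-- The number of bars of length `> ε`: all `nI` infinite bars together with the finite
bars `A(γⱼ) − A(ηⱼ) > ε`. -/
noncomputable def barCount {F : Type*} [Field F] {ι : Type*} [Fintype ι]
    {Ax : ι → ℝ} {D : (ι → HahnSeries ℝ F) →ₗ[HahnSeries ℝ F] (ι → HahnSeries ℝ F)}
    (SD : SingularDecomposition Ax D) (ε : ℝ) : ℕ :=
  SD.nI + Nat.card {j : Fin SD.nF |
    act Ax (SD.eta j) + ((ε : ℝ) : WithBot ℝ) < act Ax (SD.gamma j)}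

section Aux

variable {F : Type*} [Field F] {ι : Type*} [Fintype ι]

local notation "Λ" => HahnSeries ℝ F

lemma term_le_act (Ax : ι → ℝ) (c : ι → Λ) (i : ι) (h : c i ≠ 0) :
    ((Ax i - nu (c i) : ℝ) : WithBot ℝ) ≤ act Ax c := by
  have := Finset.le_sup (f := fun i => if c i = 0 then (⊥ : WithBot ℝ)
      else ((Ax i - nu (c i) : ℝ) : WithBot ℝ)) (Finset.mem_univ i)
  simp only [if_neg h] at this
  exact this

lemma act_ne_bot {Ax : ι → ℝ} {c : ι → Λ} (h : c ≠ 0) : act Ax c ≠ ⊥ := by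
  obtain ⟨i, hi⟩ := Function.ne_iff.mp h
  intro hbot
  have := term_le_act Ax c i hi
  rw [hbot, le_bot_iff] at this
  exact WithBot.coe_ne_bot this

lemma act_exists_coe {Ax : ι → ℝ} {c : ι → Λ} (h : c ≠ 0) :
    ∃ r : ℝ, act Ax c = (r : WithBot ℝ) := by
  cases hh : act Ax c with
  | bot => exact absurd hh (act_ne_bot h)
  | coe r => exact ⟨r, rfl⟩

lemma act_zero (Ax : ι → ℝ) : act Ax (0 : ι → Λ) = ⊥ := by
  refine le_bot_iff.mp (Finset.sup_le fun i _ => ?_)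
  simp

lemma act_mask_le (Ax : ι → ℝ) {m c : ι → Λ} (hm : ∀ i, m i = 0 ∨ m i = c i) :
    act Ax m ≤ act Ax c := by
  apply Finset.sup_le
  intro i _
  rcases hm i with h0 | he
  · simp [h0]
  · rw [he]
    by_cases hc : c i = 0
    · simp [hc]
    · rw [if_neg hc]
      exact term_le_act Ax c i hc

lemma act_add_le (Ax : ι → ℝ) (x y : ι → Λ) : act Ax (x + y) ≤ act Ax x ⊔ act Ax y := by
  apply Finset.sup_le
  intro i _
  by_cases hxy : (x + y) i = 0
  · simp [hxy]
  · rw [if_neg hxy]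
    have hadd : (x + y) i = x i + y i := rfl
    by_cases hx : x i = 0
    · have hyi : (x + y) i = y i := by rw [hadd, hx, zero_add]
      refine le_sup_of_le_right ?_
      rw [hyi]
      exact term_le_act Ax y i (by rwa [hyi] at hxy)
    · by_cases hy : y i = 0
      · have hxi : (x + y) i = x i := by rw [hadd, hy, add_zero]
        refine le_sup_of_le_left ?_
        rw [hxi]
        exact term_le_act Ax x i (by rwa [hxi] at hxy)
      · have hmin : min (nu (x i)) (nu (y i)) ≤ nu ((x + y) i) := by
          have := HahnSeries.min_order_le_order_add (x := x i) (y := y i)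
            (by rwa [← hadd])
          rw [hadd]
          exact this
        rcases min_le_iff.mp hmin with h | h
        · refine le_sup_of_le_left (le_trans ?_ (term_le_act Ax x i hx))
          exact WithBot.coe_le_coe.mpr (by linarith)
        · refine le_sup_of_le_right (le_trans ?_ (term_le_act Ax y i hy))
          exact WithBot.coe_le_coe.mpr (by linarith)

lemma D_apply (D : (ι → Λ) →ₗ[Λ] (ι → Λ)) (v : ι → Λ) (i : ι) :
    D v i = ∑ j, v j * D (Pi.single j 1) i := by
  have hv : v = ∑ j, v j • (Pi.single j 1 : ι → Λ) := by
    funext x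
    rw [Finset.sum_apply]
    simp [Pi.single_apply]
  conv_lhs => rw [hv]
  rw [map_sum, Finset.sum_apply]
  exact Finset.sum_congr rfl fun j _ => by rw [map_smul]; rfl

lemma exists_support_term {D : (ι → Λ) →ₗ[Λ] (ι → Λ)} {v : ι → Λ} {i : ι} {a : ℝ}
    (ha : a ∈ (D v i).support) :
    ∃ j, v j ≠ 0 ∧ ∃ a2 ∈ (D (Pi.single j 1) i).support, nu (v j) + a2 ≤ a := by
  rw [HahnSeries.mem_support, D_apply] at ha
  have hsum : (∑ j, v j * D (Pi.single j 1) i).coeff a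
      = ∑ j, (v j * D (Pi.single j 1) i).coeff a := by
    exact map_sum (AddMonoidHom.mk' (fun x : Λ => x.coeff a)
      (fun x y => HahnSeries.coeff_add)) _ _
  rw [hsum] at ha
  obtain ⟨j, -, hj⟩ := Finset.exists_ne_zero_of_sum_ne_zero ha
  have hmem : a ∈ (v j * D (Pi.single j 1) i).support := hj
  obtain ⟨a1, ha1, a2, ha2, hsum2⟩ := HahnSeries.support_mul_subset hmem
  refine ⟨j, ?_, a2, ha2, ?_⟩
  · intro h0
    rw [h0] at ha1
    simp at ha1
  · have h1 : nu (v j) ≤ a1 := HahnSeries.order_le_of_coeff_ne_zero ha1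
    have hsa : a1 + a2 = a := hsum2
    linarith

lemma scaledAct_zero (Ax : ι → ℝ) (v : ι → Λ) : scaledAct Ax (0 : Λ) v = ⊥ := if_pos rfl

lemma act_D_masked_lt (Ax : ι → ℝ) (D : (ι → Λ) →ₗ[Λ] (ι → Λ)) {ε : ℝ}
    (p : ι → Prop) {v : ι → Λ} (hv : v ≠ 0) (mask : ι → Λ)
    (hmask : ∀ i, mask i = 0 ∨ (p i ∧ mask i = D v i))
    (hiso : ∀ i, p i → ∀ j, v j ≠ 0 →
      ∀ a ∈ (D (Pi.single j 1) i).support, ε < Ax j - Ax i + a) :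
    act Ax mask + ((ε : ℝ) : WithBot ℝ) < act Ax v := by
  obtain ⟨r, hr⟩ := act_exists_coe (Ax := Ax) hv
  have hsup : act Ax mask < ((r - ε : ℝ) : WithBot ℝ) := by
    refine (Finset.sup_lt_iff (WithBot.bot_lt_coe _)).mpr fun i _ => ?_
    rcases hmask i with h0 | ⟨hp, heq⟩
    · simp [h0]
    · by_cases hD : mask i = 0
      · simp [hD]
      · rw [if_neg hD, heq]
        rw [heq] at hD
        have horder : nu (D v i) ∈ (D v i).support := by
          rw [HahnSeries.mem_support]
          exact HahnSeries.coeff_order_eq_zero.not.mpr hD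
        obtain ⟨j, hj, a2, ha2, hle⟩ := exists_support_term horder
        have hlen := hiso i hp j hj a2 ha2
        have hterm := term_le_act Ax v j hj
        rw [hr] at hterm
        have hterm' := WithBot.coe_le_coe.mp hterm
        exact WithBot.coe_lt_coe.mpr (by linarith)
  rw [hr]
  cases hq : act Ax mask with
  | bot => simp
  | coe m =>
    rw [hq] at hsup
    have hm := WithBot.coe_lt_coe.mp hsup
    rw [← WithBot.coe_add]
    exact WithBot.coe_lt_coe.mpr (by linarith [WithBot.coe_lt_coe.mp hsup])

lemma add_coe_lt_cancel {a b : WithBot ℝ} {e : ℝ}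
    (h : a + ((e : ℝ) : WithBot ℝ) < b + ((e : ℝ) : WithBot ℝ)) : a < b := by
  cases b with
  | bot => simp at h
  | coe rb =>
    cases a with
    | bot => exact WithBot.bot_lt_coe _
    | coe ra =>
      rw [← WithBot.coe_add, ← WithBot.coe_add, WithBot.coe_lt_coe] at h
      exact WithBot.coe_lt_coe.mpr (by linarith)

lemma scaled_short (Ax : ι → ℝ) {e g : ι → Λ} (he : e ≠ 0) (hg : g ≠ 0) {ε : ℝ}
    (hshort : ¬ (act Ax e + ((ε : ℝ) : WithBot ℝ) < act Ax g)) (m : Λ) :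
    scaledAct Ax m g ≤ scaledAct Ax m e + ((ε : ℝ) : WithBot ℝ) := by
  by_cases hm : m = 0
  · simp [scaledAct, hm]
  · rw [scaledAct, scaledAct, if_neg hm, if_neg hm]
    obtain ⟨re, hre⟩ := act_exists_coe (Ax := Ax) he
    obtain ⟨rg, hrg⟩ := act_exists_coe (Ax := Ax) hg
    rw [hre, hrg] at hshort ⊢
    rw [← WithBot.coe_add, WithBot.coe_lt_coe, not_lt] at hshort
    rw [WithBot.map_coe, WithBot.map_coe, ← WithBot.coe_add, WithBot.coe_le_coe]
    linarith

end Aux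


lemma sum_zero_smul {F : Type*} [Field F] {ι : Type*} [Fintype ι] {N : Type*} [Fintype N]
    (f : N → ι → HahnSeries ℝ F) : ∑ x, (0 : HahnSeries ℝ F) • f x = 0 := by
  rw [Finset.sum_congr rfl fun x _ => zero_smul (HahnSeries ℝ F) (f x), Finset.sum_const_zero]

lemma main_vanish {F : Type*} [Field F] {ι : Type*} [Fintype ι]
    (Ax : ι → ℝ) (D : (ι → HahnSeries ℝ F) →ₗ[HahnSeries ℝ F] (ι → HahnSeries ℝ F))
    (hD2 : ∀ c, D (D c) = 0)
    (SD : SingularDecomposition Ax D) (ε : ℝ)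
    (s : Finset ι) (hs : ∀ i ∈ s, EpsIsolated Ax D ε i)
    (k l : Fin SD.nF → HahnSeries ℝ F)
    (hlong : ∀ j, act Ax (SD.eta j) + ((ε : ℝ) : WithBot ℝ) < act Ax (SD.gamma j) →
      k j = 0 ∧ l j = 0)
    (hsupp : ∀ i ∉ s, ((∑ j, k j • SD.eta j) + ∑ j, l j • SD.gamma j) i = 0) :
    (∑ j, k j • SD.eta j) + (∑ j, l j • SD.gamma j) = 0 := by
  by_contra hne
  set w := ∑ j, k j • SD.eta j with hw
  set c := ∑ j, l j • SD.gamma j with hc0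
  set g := ∑ j, k j • SD.gamma j with hg0
  have hη : ∀ j, SD.eta j ≠ 0 := fun j => by
    simpa using SD.indep.ne_zero (Sum.inr (Sum.inl j))
  have hγ : ∀ j, SD.gamma j ≠ 0 := fun j => by
    simpa using SD.indep.ne_zero (Sum.inr (Sum.inr j))
  have hDg : D g = w := by
    rw [hg0, hw, map_sum]
    exact Finset.sum_congr rfl fun j _ => by rw [map_smul, SD.d_gamma]
  have hDv : D (w + c) = ∑ j, l j • SD.eta j := by
    rw [map_add, ← hDg, hD2 g, zero_add, hc0, map_sum]
    exact Finset.sum_congr rfl fun j _ => by rw [map_smul, SD.d_gamma]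
  obtain ⟨r, hr⟩ := act_exists_coe (Ax := Ax) hne
  -- sums over the decomposition index
  have hsum_eta : ∀ m : Fin SD.nF → HahnSeries ℝ F,
      (∑ x, (Sum.elim (fun _ => (0 : HahnSeries ℝ F)) (Sum.elim m fun _ => 0) x) •
        Sum.elim SD.alpha (Sum.elim SD.eta SD.gamma) x) = ∑ j, m j • SD.eta j := by
    intro m
    rw [Fintype.sum_sum_type, Fintype.sum_sum_type]
    simp only [Sum.elim_inl, Sum.elim_inr]
    rw [sum_zero_smul, sum_zero_smul, zero_add, add_zero]
  have hsum_gamma : ∀ m : Fin SD.nF → HahnSeries ℝ F,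
      (∑ x, (Sum.elim (fun _ => (0 : HahnSeries ℝ F)) (Sum.elim (fun _ => 0) m) x) •
        Sum.elim SD.alpha (Sum.elim SD.eta SD.gamma) x) = ∑ j, m j • SD.gamma j := by
    intro m
    rw [Fintype.sum_sum_type, Fintype.sum_sum_type]
    simp only [Sum.elim_inl, Sum.elim_inr]
    rw [sum_zero_smul, sum_zero_smul, zero_add, zero_add]
  have hsum_both :
      (∑ x, (Sum.elim (fun _ => (0 : HahnSeries ℝ F)) (Sum.elim k l) x) •
        Sum.elim SD.alpha (Sum.elim SD.eta SD.gamma) x) = w + c := by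
    rw [Fintype.sum_sum_type, Fintype.sum_sum_type]
    simp only [Sum.elim_inl, Sum.elim_inr]
    rw [sum_zero_smul, zero_add, hw, hc0]
  have horthDv := SD.orth (Sum.elim (fun _ => (0 : HahnSeries ℝ F)) (Sum.elim l fun _ => 0))
  rw [hsum_eta l] at horthDv
  have horthc := SD.orth (Sum.elim (fun _ => (0 : HahnSeries ℝ F)) (Sum.elim (fun _ => 0) l))
  rw [hsum_gamma l, ← hc0] at horthc
  have horthg := SD.orth (Sum.elim (fun _ => (0 : HahnSeries ℝ F)) (Sum.elim (fun _ => 0) k))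
  rw [hsum_gamma k, ← hg0] at horthg
  have horthv := SD.orth (Sum.elim (fun _ => (0 : HahnSeries ℝ F)) (Sum.elim k l))
  rw [hsum_both] at horthv
  -- outgoing isolation
  have hiso_out : ∀ i, (fun _ : ι => True) i → ∀ j, (w + c) j ≠ 0 →
      ∀ a ∈ (D (Pi.single j 1) i).support, ε < Ax j - Ax i + a := by
    intro i _ j hj a ha
    have hjs : j ∈ s := by
      by_contra hjs
      exact hj (hsupp j hjs)
    exact (hs j hjs).1 i a ha
  have hout := act_D_masked_lt Ax D (fun _ => True) hne (D (w + c))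
    (fun i => Or.inr ⟨trivial, rfl⟩) hiso_out
  -- c is small
  have hc_le : act Ax c ≤ act Ax (D (w + c)) + ((ε : ℝ) : WithBot ℝ) := by
    rw [horthc]
    refine Finset.sup_le ?_
    rintro (x | x | x) -
    · exact le_trans (le_of_eq (scaledAct_zero Ax _)) bot_le
    · exact le_trans (le_of_eq (scaledAct_zero Ax _)) bot_le
    · simp only [Sum.elim_inr]
      by_cases hlo : act Ax (SD.eta x) + ((ε : ℝ) : WithBot ℝ) < act Ax (SD.gamma x)
      · rw [(hlong x hlo).2]
        exact le_trans (le_of_eq (scaledAct_zero Ax _)) bot_le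
      · refine le_trans (scaled_short Ax (hη x) (hγ x) hlo (l x)) ?_
        refine add_le_add_left ?_ _
        rw [hDv, horthDv]
        exact Finset.le_sup (f := fun j => scaledAct Ax
          (Sum.elim (fun _ => (0 : HahnSeries ℝ F)) (Sum.elim l fun _ => 0) j)
          (Sum.elim SD.alpha (Sum.elim SD.eta SD.gamma) j))
          (Finset.mem_univ (Sum.inr (Sum.inl x)))
  have hC_lt : act Ax c < act Ax (w + c) := lt_of_le_of_lt hc_le hout
  -- g is not too big
  have hg_le : act Ax g ≤ act Ax (w + c) + ((ε : ℝ) : WithBot ℝ) := by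
    rw [horthg]
    refine Finset.sup_le ?_
    rintro (x | x | x) -
    · exact le_trans (le_of_eq (scaledAct_zero Ax _)) bot_le
    · exact le_trans (le_of_eq (scaledAct_zero Ax _)) bot_le
    · simp only [Sum.elim_inr]
      by_cases hlo : act Ax (SD.eta x) + ((ε : ℝ) : WithBot ℝ) < act Ax (SD.gamma x)
      · rw [(hlong x hlo).1]
        exact le_trans (le_of_eq (scaledAct_zero Ax _)) bot_le
      · refine le_trans (scaled_short Ax (hη x) (hγ x) hlo (k x)) ?_
        refine add_le_add_left ?_ _
        rw [horthv]
        exact Finset.le_sup (f := fun j => scaledAct Ax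
          (Sum.elim (fun _ => (0 : HahnSeries ℝ F)) (Sum.elim k l) j)
          (Sum.elim SD.alpha (Sum.elim SD.eta SD.gamma) j))
          (Finset.mem_univ (Sum.inr (Sum.inl x)))
  -- incoming isolation
  have hgP_lt : act Ax (fun i => if i ∈ s then D g i else 0) < act Ax (w + c) := by
    by_cases hgz : g = 0
    · have hz : (fun i => if i ∈ s then D g i else 0) = 0 := by
        funext i; rw [hgz, map_zero]; simp
      rw [hz, act_zero, hr]
      exact WithBot.bot_lt_coe _
    · have hiso_in : ∀ i, i ∈ s → ∀ j, g j ≠ 0 →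
          ∀ a ∈ (D (Pi.single j 1) i).support, ε < Ax j - Ax i + a :=
        fun i hi j _ a ha => (hs i hi).2 j a ha
      have hin := act_D_masked_lt Ax D (fun i => i ∈ s) hgz
        (fun i => if i ∈ s then D g i else 0)
        (fun i => by by_cases hi : i ∈ s <;> simp [hi]) hiso_in
      exact add_coe_lt_cancel (lt_of_lt_of_le hin hg_le)
  -- decompose w + c over s
  have hveq : w + c = (fun i => if i ∈ s then D g i else 0) +
      (fun i => if i ∈ s then c i else 0) := by
    funext i
    by_cases hi : i ∈ s
    · simp only [Pi.add_apply, if_pos hi]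
      rw [← hDg]
    · simp only [Pi.add_apply, if_neg hi, add_zero]
      exact hsupp i hi
  have hfinal : act Ax (w + c) < act Ax (w + c) := by
    calc act Ax (w + c)
        ≤ act Ax (fun i => if i ∈ s then D g i else 0) ⊔
          act Ax (fun i => if i ∈ s then c i else 0) := by
          conv_lhs => rw [hveq]
          exact act_add_le Ax _ _
      _ < act Ax (w + c) :=
          sup_lt_iff.mpr ⟨hgP_lt, lt_of_le_of_lt
            (act_mask_le Ax (m := fun i => if i ∈ s then c i else 0)
              (fun i => by by_cases hi : i ∈ s <;> simp [hi])) hC_lt⟩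
  exact absurd hfinal (lt_irrefl _)


lemma zero_smul_fun {F : Type*} [Field F] {ι : Type*} (y : ι → HahnSeries ℝ F) :
    (0 : HahnSeries ℝ F) • y = 0 := by
  funext i
  show (0 : HahnSeries ℝ F) • y i = 0
  rw [smul_eq_mul, zero_mul]

lemma sum_dite_subtype {M : Type*} [AddCommMonoid M] {n : Type*} [Fintype n] (p : n → Prop)
    [DecidablePred p] (f : {j // p j} → M) :
    (∑ j : n, if h : p j then f ⟨j, h⟩ else 0) = ∑ j : {j // p j}, f j := by
  rw [← Finset.sum_filter_add_sum_filter_not Finset.univ p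
    (fun j => if h : p j then f ⟨j, h⟩ else 0)]
  have h2 : ∑ j ∈ Finset.univ.filter (fun j => ¬ p j),
      (if h : p j then f ⟨j, h⟩ else 0) = 0 :=
    Finset.sum_eq_zero fun j hj => dif_neg (Finset.mem_filter.mp hj).2
  rw [h2, add_zero]
  have h3 := Finset.sum_subtype (p := p) (F := inferInstance) (Finset.univ.filter p)
    (fun x => by simp) (fun j => if h : p j then f ⟨j, h⟩ else 0)
  rw [h3]
  exact Finset.sum_congr rfl fun a _ => dif_pos a.2

lemma barCount_eq_fintype {F : Type*} [Field F] {ι : Type*} [Fintype ι]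
    {Ax : ι → ℝ} {D : (ι → HahnSeries ℝ F) →ₗ[HahnSeries ℝ F] (ι → HahnSeries ℝ F)}
    (SD : SingularDecomposition Ax D) (ε : ℝ) :
    barCount SD ε = SD.nI + Fintype.card {j : Fin SD.nF //
      act Ax (SD.eta j) + ((ε : ℝ) : WithBot ℝ) < act Ax (SD.gamma j)} := by
  classical
  rw [barCount, Nat.card_eq_fintype_card]
  exact congrArg (fun t => SD.nI + t) (Fintype.card_congr (Equiv.refl _))

/-- If `p` of the generators of a finite-dimensional filtered complex `(C, ∂, A)` over the
Novikov field are `ε`-isolated, then the number of bars of length greater than `ε` in the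
barcode of `C` is at least `p/2`. -/
theorem barCount_ge_half_isolated {F : Type*} [Field F] {ι : Type*} [Fintype ι]
    (Ax : ι → ℝ) (D : (ι → HahnSeries ℝ F) →ₗ[HahnSeries ℝ F] (ι → HahnSeries ℝ F))
    (hD2 : ∀ c, D (D c) = 0) (hdec : StrictlyActionDecreasing Ax D)
    (SD : SingularDecomposition Ax D) (ε : ℝ) (hε : 0 < ε)
    (s : Finset ι) (hs : ∀ i ∈ s, EpsIsolated Ax D ε i) :
    (s.card : ℝ) / 2 ≤ (barCount SD ε : ℝ) := by
  classical
  -- dimension of the total space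
  have hcard : Fintype.card ι = SD.nI + (SD.nF + SD.nF) := by
    have h2 := Module.finrank_eq_card_basis (Module.Basis.mk SD.indep SD.spans)
    rw [Module.finrank_pi] at h2
    simpa using h2
  -- notation
  set P : Fin SD.nF → Prop := fun j =>
    act Ax (SD.eta j) + ((ε : ℝ) : WithBot ℝ) < act Ax (SD.gamma j) with hP
  -- the two families
  have h1 : LinearIndependent (HahnSeries ℝ F)
      (fun i : {i // i ∈ s} => (Pi.single (i : ι) 1 : ι → HahnSeries ℝ F)) := by
    have := (Pi.basisFun (HahnSeries ℝ F) ι).linearIndependent.comp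
      (fun i : {i // i ∈ s} => (i : ι)) Subtype.val_injective
    simpa [Function.comp_def] using this
  have h2 : LinearIndependent (HahnSeries ℝ F)
      (Sum.elim (fun j : {j // ¬ P j} => SD.eta (j : Fin SD.nF))
        (fun j : {j // ¬ P j} => SD.gamma (j : Fin SD.nF))) := by
    have hinj : Function.Injective (Sum.elim
        (fun j : {j // ¬ P j} => (Sum.inr (Sum.inl (j : Fin SD.nF)) :
          Fin SD.nI ⊕ (Fin SD.nF ⊕ Fin SD.nF)))
        (fun j : {j // ¬ P j} => Sum.inr (Sum.inr (j : Fin SD.nF)))) := by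
      rintro (a | a) (b | b) hab <;> simp_all [Subtype.ext_iff]
    have hcomp := SD.indep.comp _ hinj
    have heq : (Sum.elim SD.alpha (Sum.elim SD.eta SD.gamma)) ∘ (Sum.elim
        (fun j : {j // ¬ P j} => (Sum.inr (Sum.inl (j : Fin SD.nF)) :
          Fin SD.nI ⊕ (Fin SD.nF ⊕ Fin SD.nF)))
        (fun j : {j // ¬ P j} => Sum.inr (Sum.inr (j : Fin SD.nF)))) =
        Sum.elim (fun j : {j // ¬ P j} => SD.eta (j : Fin SD.nF))
          (fun j : {j // ¬ P j} => SD.gamma (j : Fin SD.nF)) := by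
      funext x; rcases x with x | x <;> rfl
    rwa [heq] at hcomp
  -- disjointness of the spans
  have hdisj : Disjoint
      (Submodule.span (HahnSeries ℝ F) (Set.range
        (fun i : {i // i ∈ s} => (Pi.single (i : ι) 1 : ι → HahnSeries ℝ F))))
      (Submodule.span (HahnSeries ℝ F) (Set.range
        (Sum.elim (fun j : {j // ¬ P j} => SD.eta (j : Fin SD.nF))
          (fun j : {j // ¬ P j} => SD.gamma (j : Fin SD.nF))))) := by
    rw [Submodule.disjoint_def]
    intro x hx1 hx2
    have hxK : ∀ i ∉ s, x i = 0 := by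
      refine Submodule.span_induction ?_ ?_ ?_ ?_ hx1
      · rintro y ⟨i, rfl⟩ i' hi'
        exact Pi.single_eq_of_ne (fun hcontr => hi' (by rw [hcontr]; exact i.2)) 1
      · intro i _; rfl
      · intro a b _ _ ha hb i hi
        simp only [Pi.add_apply, ha i hi, hb i hi, add_zero]
      · intro a y _ hy i hi
        simp only [Pi.smul_apply, hy i hi, smul_zero]
    obtain ⟨cf, hcf⟩ := (Submodule.mem_span_range_iff_exists_fun _).mp hx2
    set kk : Fin SD.nF → HahnSeries ℝ F :=
      fun j => if h : ¬ P j then cf (Sum.inl ⟨j, h⟩) else 0 with hkk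
    set ll : Fin SD.nF → HahnSeries ℝ F :=
      fun j => if h : ¬ P j then cf (Sum.inr ⟨j, h⟩) else 0 with hll
    have hsum : (∑ j, kk j • SD.eta j) + (∑ j, ll j • SD.gamma j) = x := by
      rw [← hcf, Fintype.sum_sum_type]
      congr 1
      · rw [← sum_dite_subtype (fun j => ¬ P j)
            (fun a : {j // ¬ P j} => cf (Sum.inl a) • (Sum.elim
              (fun j : {j // ¬ P j} => SD.eta (j : Fin SD.nF))
              (fun j : {j // ¬ P j} => SD.gamma (j : Fin SD.nF)) (Sum.inl a)))]
        refine Finset.sum_congr rfl fun j _ => ?_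
        simp only [hkk]
        by_cases h : ¬ P j
        · rw [dif_pos h, dif_pos h]
          rfl
        · rw [dif_neg h, dif_neg h]
          exact zero_smul_fun _
      · rw [← sum_dite_subtype (fun j => ¬ P j)
            (fun a : {j // ¬ P j} => cf (Sum.inr a) • (Sum.elim
              (fun j : {j // ¬ P j} => SD.eta (j : Fin SD.nF))
              (fun j : {j // ¬ P j} => SD.gamma (j : Fin SD.nF)) (Sum.inr a)))]
        refine Finset.sum_congr rfl fun j _ => ?_
        simp only [hll]
        by_cases h : ¬ P j
        · rw [dif_pos h, dif_pos h]
          rfl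
        · rw [dif_neg h, dif_neg h]
          exact zero_smul_fun _
    have hlongkl : ∀ j, act Ax (SD.eta j) + ((ε : ℝ) : WithBot ℝ) < act Ax (SD.gamma j) →
        kk j = 0 ∧ ll j = 0 := by
      intro j hj
      have hPz : ¬ ¬ P j := not_not_intro hj
      constructor
      · simp only [hkk]; rw [dif_neg hPz]
      · simp only [hll]; rw [dif_neg hPz]
    have hsupp : ∀ i ∉ s, ((∑ j, kk j • SD.eta j) + ∑ j, ll j • SD.gamma j) i = 0 := by
      intro i hi
      rw [hsum]
      exact hxK i hi
    have hx0 := main_vanish Ax D hD2 SD ε s hs kk ll hlongkl hsupp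
    rw [hsum] at hx0
    exact hx0
  -- counting
  have hind := ((h1.sum_type h2 hdisj).fintype_card_le_finrank)
  rw [Module.finrank_pi, hcard, Fintype.card_sum, Fintype.card_sum, Fintype.card_coe] at hind
  have hcompl : Fintype.card {j // ¬ P j} = SD.nF - Fintype.card {j // P j} := by
    have := Fintype.card_subtype_compl P
    rwa [Fintype.card_fin] at this
  have hPle : Fintype.card {j // P j} ≤ SD.nF := by
    have := Fintype.card_subtype_le P
    rwa [Fintype.card_fin] at this
  have hbar : barCount SD ε = SD.nI + Fintype.card {j // P j} := by
    rw [barCount_eq_fintype]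
  have hfinal : s.card ≤ 2 * barCount SD ε := by omega
  have hcast : (s.card : ℝ) ≤ 2 * (barCount SD ε : ℝ) := by exact_mod_cast hfinal
  linarith


end
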